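/- Let f : [0,∞) → [0,∞) be continuously differentiable, let h : [0,∞) → [0,∞) be continuous with h(t) ≥ C for some constant C > 0 and all t ≥ 0, and let g : [0,∞) → ℝ be continuous with g(t) → 0 as t → ∞. If f'(t) ≤ −h(t) f(t) + h(t) g(t) for all t ≥ 0, then f(t) → 0 as t → ∞. -/
import Mathlib


open Set Filter Topology MeasureTheory

/-- Lemma 2.6, variant of Gronwall's lemma:
If `f : [0,∞) → [0,∞)` is C¹, `h : [0,∞) → [0,∞)` is continuous with `h ≥ C > 0`,
`g : [0,∞) → ℝ` is continuous with `g(t) → 0` as `t → ∞`, and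
`f'(t) ≤ −h(t) f(t) + h(t) g(t)` for all `t ≥ 0`, then `f(t) → 0` as `t → ∞`. -/
theorem gronwall_variant
    (f f' h g : ℝ → ℝ) (C : ℝ)
    (hf_nonneg : ∀ t ∈ Ici (0:ℝ), 0 ≤ f t)
    (hf_deriv : ∀ t ∈ Ici (0:ℝ), HasDerivWithinAt f (f' t) (Ici 0) t)
    (hf'_cont : ContinuousOn f' (Ici 0))
    (hh_cont : ContinuousOn h (Ici 0))
    (hh_nonneg : ∀ t ∈ Ici (0:ℝ), 0 ≤ h t)
    (hC : 0 < C)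
    (hh_lb : ∀ t ∈ Ici (0:ℝ), C ≤ h t)
    (hg_cont : ContinuousOn g (Ici 0))
    (hg_lim : Tendsto g atTop (nhds 0))
    (hineq : ∀ t ∈ Ici (0:ℝ), f' t ≤ -h t * f t + h t * g t) :
    Tendsto f atTop (nhds 0) := by
  rw [Metric.tendsto_atTop]
  intro ε hε
  have hε3 : 0 < ε / 3 := by linarith
  -- choose T ≥ 0 with g t ≤ ε/3 for t ≥ T
  obtain ⟨T₀, hT₀⟩ := (Metric.tendsto_atTop.1 hg_lim) (ε / 3) hε3
  set T : ℝ := max T₀ 0 with hT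
  have hT0 : (0:ℝ) ≤ T := le_max_right _ _
  have hg_small : ∀ t, T ≤ t → g t ≤ ε / 3 := by
    intro t ht
    have := hT₀ t (le_trans (le_max_left _ _) ht)
    rw [Real.dist_eq, sub_zero] at this
    exact le_of_lt (lt_of_abs_lt this)
  -- barrier function
  set B : ℝ → ℝ := fun t => 2 * (ε / 3) + f T * Real.exp (-C * (t - T)) with hB
  set B' : ℝ → ℝ := fun t => -C * (f T * Real.exp (-C * (t - T))) with hB'
  have hBderiv : ∀ x, HasDerivAt B (B' x) x := by
    intro x
    have h1 : HasDerivAt (fun t : ℝ => -C * (t - T)) (-C) x := by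
      simpa using ((hasDerivAt_id x).sub_const T).const_mul (-C)
    have h2 := (h1.exp.const_mul (f T)).const_add (2 * (ε / 3))
    simpa [hB, hB', mul_comm, mul_left_comm, mul_assoc] using h2
  -- main bound: f t ≤ B t for all t ≥ T
  have key : ∀ t, T ≤ t → f t ≤ B t := by
    intro b hb
    have hmain : ∀ ⦃x⦄, x ∈ Icc T b → f x ≤ B x := by
      refine image_le_of_deriv_right_lt_deriv_boundary
        (f := f) (f' := f') (a := T) (b := b) ?_ ?_ ?_ hBderiv ?_
      · exact (fun x hx => ((hf_deriv x (le_trans hT0 hx.1)).continuousWithinAt).mono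
          (fun y hy => le_trans hT0 hy.1))
      · intro x hx
        have hx0 : (0:ℝ) ≤ x := le_trans hT0 hx.1
        exact (hf_deriv x hx0).mono (fun y hy => le_trans hx0 hy)
      · have hz : -C * (T - T) = 0 := by ring
        simp only [hB, hz, Real.exp_zero, mul_one]
        linarith
      · intro x hx hfx
        have hx0 : (0:ℝ) ≤ x := le_trans hT0 hx.1
        have hhx : C ≤ h x := hh_lb x hx0
        have hgx : g x ≤ ε / 3 := hg_small x hx.1
        have hexp : 0 < Real.exp (-C * (x - T)) := Real.exp_pos _
        have hfT : 0 ≤ f T := hf_nonneg T hT0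
        have hBx : 2 * (ε / 3) ≤ B x := by
          simp only [hB]; nlinarith
        have h1 : f' x ≤ h x * (g x - f x) := by
          have := hineq x hx0; nlinarith
        have h2 : g x - f x ≤ -(ε/3) - (B x - 2 * (ε/3)) := by
          rw [hfx] at *; linarith
        have h3 : h x * (g x - f x) ≤ C * (g x - f x) := by
          have : g x - f x ≤ 0 := by rw [hfx]; linarith
          nlinarith
        have : f' x ≤ C * (-(ε/3) - (B x - 2 * (ε/3))) := by nlinarith
        have hBform : B x - 2 * (ε/3) = f T * Real.exp (-C * (x - T)) := by
          simp [hB]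
        calc f' x ≤ C * (-(ε/3) - (B x - 2 * (ε/3))) := this
          _ < -C * (B x - 2 * (ε/3)) := by nlinarith
          _ = B' x := by rw [hBform]
    exact hmain ⟨hb, le_refl b⟩
  -- pick t₁ so that the exponential tail is small
  have htail : Tendsto (fun t => f T * Real.exp (-C * (t - T))) atTop (nhds 0) := by
    have : Tendsto (fun t : ℝ => -C * (t - T)) atTop atBot := by
      apply Tendsto.const_mul_atTop_of_neg (by linarith : -C < 0)
      exact tendsto_atTop_add_const_right _ _ tendsto_id
    simpa using (Real.tendsto_exp_atBot.comp this).const_mul (f T)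
  obtain ⟨T₁, hT₁⟩ := (Metric.tendsto_atTop.1 htail) (ε / 3) hε3
  refine ⟨max T T₁, fun t ht => ?_⟩
  have htT : T ≤ t := le_trans (le_max_left _ _) ht
  have h1 : f t ≤ B t := key t htT
  have h2 : f T * Real.exp (-C * (t - T)) < ε / 3 := by
    have := hT₁ t (le_trans (le_max_right _ _) ht)
    rw [Real.dist_eq, sub_zero] at this
    exact lt_of_abs_lt this
  have h0 : 0 ≤ f t := hf_nonneg t (le_trans hT0 htT)
  rw [Real.dist_eq, sub_zero, abs_of_nonneg h0]
  have : B t < ε := by simp only [hB]; linarith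
  linarith
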